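/- Let Ω be a bounded Lipschitz domain, u harmonic with trace g, v harmonic. Suppose (τ, ω) ∈ H(div,Ω) × L²(Ω) solves the mixed problem: ⟨τ,σ⟩_{L²} + ⟨div σ, ω⟩_{L²} = ⟨g − v|_Γ, σ·n|_Γ⟩_Γ for all σ ∈ H(div,Ω), and ⟨div τ, ψ⟩_{L²} = 0 for all ψ ∈ L²(Ω). Then ω ∈ H¹(Ω) with ∇ω = τ, Δω = 0 weakly, ω|_Γ = g − v|_Γ, and hence ω = u − v and τ = ∇(u−v). -/
import Mathlib


open scoped RealInnerProductSpace

/-- Abstract Sobolev setting: `V = H¹(Ω)`, `L2v = L²(Ω;ℝ^d)`, `L2 = L²(Ω)`,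
`Ht = H^{1/2}(Γ)`, `Hm = H^{−1/2}(Γ)`, `Hd = H(div,Ω)`, with operators `grad`, `emb`,
`tr`, `toL2v`, `dvg`, `ntr`, `pair` and:
* `hIBP`: integration by parts `⟪∇w, σ⟫ = ⟨w|_Γ, σ·n⟩_Γ − ⟪w, div σ⟫`;
* `hntrSurj`: surjectivity of the normal trace `H(div,Ω) → H^{−1/2}(Γ)`;
* `hpair`: nondegeneracy of the `H^{1/2}×H^{−1/2}` duality pairing;
* `hker`: Friedrichs property (zero trace and zero gradient imply zero);
* `hmax`: an `L²` function whose distributional gradient (tested against `H(div)` fields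
  with vanishing normal trace) lies in `L²` belongs to `H¹(Ω)`.

Statement: if `(τ, ω) ∈ H(div,Ω) × L²(Ω)` solves the mixed problem
`⟪τ,σ⟫ + ⟪div σ, ω⟫ = ⟨g − v|_Γ, σ·n⟩_Γ` for all `σ`, and `⟪div τ, ψ⟫ = 0` for all `ψ`,
then `ω ∈ H¹(Ω)` with `∇ω = τ`, `Δω = 0` weakly, `ω|_Γ = g − v|_Γ`, and hence
`ω = u − v` and `τ = ∇(u−v)`. -/
theorem stmt15
    {V L2v L2 Ht Hm Hd : Type*}
    [AddCommGroup V] [Module ℝ V]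
    [NormedAddCommGroup L2v] [InnerProductSpace ℝ L2v]
    [NormedAddCommGroup L2] [InnerProductSpace ℝ L2]
    [AddCommGroup Ht] [Module ℝ Ht] [AddCommGroup Hm] [Module ℝ Hm]
    [AddCommGroup Hd] [Module ℝ Hd]
    (grad : V →ₗ[ℝ] L2v) (emb : V →ₗ[ℝ] L2) (tr : V →ₗ[ℝ] Ht)
    (toL2v : Hd →ₗ[ℝ] L2v) (dvg : Hd →ₗ[ℝ] L2) (ntr : Hd →ₗ[ℝ] Hm)
    (pair : Ht →ₗ[ℝ] Hm →ₗ[ℝ] ℝ)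
    (hIBP : ∀ (w : V) (σ : Hd),
      ⟪grad w, toL2v σ⟫ = pair (tr w) (ntr σ) - ⟪emb w, dvg σ⟫)
    (hntrSurj : Function.Surjective ntr)
    (hpair : ∀ f : Ht, (∀ m : Hm, pair f m = 0) → f = 0)
    (hker : ∀ φ : V, tr φ = 0 → grad φ = 0 → φ = 0)
    (hmax : ∀ (w : L2) (gw : L2v),
      (∀ σ : Hd, ntr σ = 0 → ⟪gw, toL2v σ⟫ = - ⟪w, dvg σ⟫) →
      ∃ ω' : V, emb ω' = w ∧ grad ω' = gw)
    (u v : V) (g : Ht) (hg : tr u = g)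
    (hu : ∀ φ : V, tr φ = 0 → ⟪grad u, grad φ⟫ = 0)
    (hv : ∀ φ : V, tr φ = 0 → ⟪grad v, grad φ⟫ = 0)
    (τ : Hd) (ω : L2)
    (hmix1 : ∀ σ : Hd, ⟪toL2v τ, toL2v σ⟫ + ⟪dvg σ, ω⟫ = pair (g - tr v) (ntr σ))
    (hmix2 : ∀ ψ : L2, ⟪dvg τ, ψ⟫ = 0) :
    ∃ ω' : V, emb ω' = ω ∧ grad ω' = toL2v τ ∧
      (∀ χ : V, tr χ = 0 → ⟪grad ω', grad χ⟫ = 0) ∧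
      tr ω' = g - tr v ∧ ω' = u - v ∧ toL2v τ = grad (u - v) := by
  obtain ⟨ω', hemb, hgrad⟩ := hmax ω (toL2v τ) (by
    intro σ hσ
    have h := hmix1 σ
    rw [hσ, map_zero] at h
    have hc := real_inner_comm (dvg σ) ω
    linarith)
  have hharm : ∀ χ : V, tr χ = 0 → ⟪grad ω', grad χ⟫ = 0 := by
    intro χ hχ
    have h := hIBP χ τ
    rw [hχ, map_zero, LinearMap.zero_apply] at h
    have h2 := hmix2 (emb χ)
    have hc1 := real_inner_comm (grad χ) (toL2v τ)
    have hc2 := real_inner_comm (dvg τ) (emb χ)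
    rw [hgrad]
    linarith
  have htr : tr ω' = g - tr v := by
    have key : ∀ m : Hm, pair (tr ω' - (g - tr v)) m = 0 := by
      intro m
      obtain ⟨σ, hσ⟩ := hntrSurj m
      have h1 := hIBP ω' σ
      have h2 := hmix1 σ
      rw [hgrad, hemb] at h1
      have hc := real_inner_comm (dvg σ) ω
      have hp : pair (tr ω') (ntr σ) = pair (g - tr v) (ntr σ) := by linarith
      rw [← hσ]
      simp [map_sub, hp]
    have := hpair _ key
    rwa [sub_eq_zero] at this
  have heq : ω' = u - v := by
    have hφtr : tr (ω' - (u - v)) = 0 := by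
      rw [map_sub, htr, map_sub, hg, sub_self]
    have hφgrad : grad (ω' - (u - v)) = 0 := by
      have h1 := hharm _ hφtr
      have h2 := hu _ hφtr
      have h3 := hv _ hφtr
      have e : grad (ω' - (u - v)) = grad ω' - grad u + grad v := by
        simp [map_sub]; abel
      have : ⟪grad (ω' - (u - v)), grad (ω' - (u - v))⟫ = 0 := by
        nth_rewrite 1 [e]
        simp only [inner_sub_left, inner_add_left]
        linarith
      exact inner_self_eq_zero.mp this
    have := hker _ hφtr hφgrad
    rwa [sub_eq_zero] at this
  exact ⟨ω', hemb, hgrad, hharm, htr, heq, by rw [← hgrad, heq]⟩
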